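/- Let E = ℝⁿ × ℝⁿ × ℝ with points (x,y,z) and Heisenberg contact form η_{(x,y,z)}(u,v,w) = w − Σᵢ yᵢuᵢ (i.e. η = dz − Σᵢ yᵢ dxⁱ). For i = 1,…,n define the vector field Xᵢ(x,y,z) = (−yᵢeᵢ, xᵢeᵢ, (xᵢ² − yᵢ²)/2) (i.e. Xᵢ = xᵢ∂_{yᵢ} − yᵢ∂_{xᵢ} + ½(xᵢ²−yᵢ²)∂_z), and let R = ∂_z = (0,0,1). Then: (i) L_{Xᵢ}η = 0 for each i, and R is a Reeb field for η; (ii) η(Xᵢ)(x,y,z) = (xᵢ² + yᵢ²)/2; (iii) all the fields R, X₁, …, Xₙ pairwise commute; (iv) at every point where (xᵢ,yᵢ) ≠ (0,0) for all i, the n+1 vectors R, X₁, …, Xₙ are linearly independent, and the set of such points is open and dense in E. Hence (E, ker η, η, 1) with first integrals η(X₁),…,η(Xₙ) is a completely integrable contact Hamiltonian system of Reeb type. (This makes precise Example 3.9 of the paper on the Heisenberg group.) -/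

import Mathlib

noncomputable section HeisAux

variable (n : ℕ)

private abbrev EE (n : ℕ) := (Fin n → ℝ) × (Fin n → ℝ) × ℝ

private def projx (i : Fin n) : EE n →L[ℝ] ℝ :=
  (ContinuousLinearMap.proj i).comp (ContinuousLinearMap.fst ℝ _ _)

private def projy (i : Fin n) : EE n →L[ℝ] ℝ :=
  (ContinuousLinearMap.proj i).comp
    ((ContinuousLinearMap.fst ℝ _ _).comp (ContinuousLinearMap.snd ℝ _ _))

private def projz : EE n →L[ℝ] ℝ :=
  (ContinuousLinearMap.snd ℝ _ _).comp (ContinuousLinearMap.snd ℝ _ _)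

@[simp] private lemma projx_apply (i : Fin n) (p : EE n) : projx n i p = p.1 i := rfl
@[simp] private lemma projy_apply (i : Fin n) (p : EE n) : projy n i p = p.2.1 i := rfl
@[simp] private lemma projz_apply (p : EE n) : projz n p = p.2.2 := rfl

private def sing (i : Fin n) : ℝ →L[ℝ] (Fin n → ℝ) :=
  (LinearMap.single ℝ (fun _ : Fin n => ℝ) i).toContinuousLinearMap

@[simp] private lemma sing_apply (i : Fin n) (a : ℝ) : sing n i a = Pi.single i a := rfl

private def etaD : EE n →L[ℝ] (EE n →L[ℝ] ℝ) :=
  -∑ i, (projy n i).smulRight (projx n i)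

@[simp] private lemma pi_single_neg (i : Fin n) (a : ℝ) :
    Pi.single (M := fun _ : Fin n => ℝ) i (-a) = -Pi.single i a := by
  funext j; simp [Pi.single_apply]; split_ifs <;> simp

@[simp] private lemma etaD_apply (w v : EE n) :
    etaD n w v = -∑ i, w.2.1 i * v.1 i := by
  simp [etaD, ContinuousLinearMap.sum_apply]

private lemma eta_fderiv
    (η : EE n → (EE n →L[ℝ] ℝ))
    (hηdef : ∀ p u, η p u = u.2.2 - ∑ i, p.2.1 i * u.1 i) (p : EE n) :
    fderiv ℝ η p = etaD n := by
  have hη : η = fun p => projz n + etaD n p := by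
    funext p
    refine ContinuousLinearMap.ext fun u => ?_
    simp [hηdef, sub_eq_add_neg]
  have h : HasFDerivAt (fun p : EE n => projz n + etaD n p) (etaD n) p := by
    simpa using (etaD n).hasFDerivAt (x := p)
  rw [hη]; exact h.fderiv

private def XD (i : Fin n) (p : EE n) : EE n →L[ℝ] EE n :=
  ((sing n i).comp (-(projy n i))).prod
    (((sing n i).comp (projx n i)).prod (p.1 i • projx n i - p.2.1 i • projy n i))

@[simp] private lemma XD_apply (i : Fin n) (p v : EE n) :
    XD n i p v = (Pi.single i (-(v.2.1 i)), Pi.single i (v.1 i),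
      p.1 i * v.1 i - p.2.1 i * v.2.1 i) := by
  simp [XD]

private lemma X_fderiv (i : Fin n)
    (X : Fin n → EE n → EE n)
    (hXdef : ∀ i p, X i p = (Pi.single i (-(p.2.1 i)), Pi.single i (p.1 i),
      (p.1 i ^ 2 - p.2.1 i ^ 2) / 2)) (p : EE n) :
    fderiv ℝ (X i) p = XD n i p := by
  have hX : X i = fun p => ((sing n i).comp (-(projy n i)) p,
      (sing n i).comp (projx n i) p,
      (projx n i p * projx n i p - projy n i p * projy n i p) / 2) := by
    funext p; rw [hXdef]; simp [sq]
  have h3 : HasFDerivAt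
      (fun p : EE n => (projx n i p * projx n i p - projy n i p * projy n i p) / 2)
      (p.1 i • projx n i - p.2.1 i • projy n i) p := by
    have hx := (projx n i).hasFDerivAt (x := p)
    have hy := (projy n i).hasFDerivAt (x := p)
    have h := ((hx.mul hx).sub (hy.mul hy)).mul_const (2⁻¹ : ℝ)
    have h2 : HasFDerivAt
        (fun p : EE n => (projx n i p * projx n i p - projy n i p * projy n i p) / 2)
        ((2⁻¹ : ℝ) • (projx n i p • projx n i + projx n i p • projx n i -
          (projy n i p • projy n i + projy n i p • projy n i))) p := by
      simpa [div_eq_mul_inv] using h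
    convert h2 using 1
    refine ContinuousLinearMap.ext fun v => ?_
    simp
    ring
  have h : HasFDerivAt (X i) (XD n i p) p := by
    rw [hX]
    exact (((sing n i).comp (-(projy n i))).hasFDerivAt.prodMk
      ((((sing n i).comp (projx n i))).hasFDerivAt.prodMk h3))
  exact h.fderiv

end HeisAux

/-- Example 3.9 (Heisenberg group): on `ℝⁿ × ℝⁿ × ℝ` with
`η = dz − Σ yᵢ dxⁱ`, the fields `Xᵢ = xᵢ∂_{yᵢ} − yᵢ∂_{xᵢ} + ½(xᵢ²−yᵢ²)∂_z`
preserve `η`, have Hamiltonians `(xᵢ²+yᵢ²)/2`, commute with each other and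
with the Reeb field `R = ∂_z`, and together with `R` are linearly independent
on the open dense set where `(xᵢ,yᵢ) ≠ (0,0)` for all `i`: a completely
integrable contact Hamiltonian system of Reeb type. -/
theorem stmt_14 (n : ℕ)
    (η : ((Fin n → ℝ) × (Fin n → ℝ) × ℝ) →
      (((Fin n → ℝ) × (Fin n → ℝ) × ℝ) →L[ℝ] ℝ))
    (hηdef : ∀ p u, η p u = u.2.2 - ∑ i, p.2.1 i * u.1 i)
    (X : Fin n → ((Fin n → ℝ) × (Fin n → ℝ) × ℝ) →
      ((Fin n → ℝ) × (Fin n → ℝ) × ℝ))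
    (hXdef : ∀ i p, X i p =
      (Pi.single i (-(p.2.1 i)), Pi.single i (p.1 i),
        (p.1 i ^ 2 - p.2.1 i ^ 2) / 2))
    (R : ((Fin n → ℝ) × (Fin n → ℝ) × ℝ) → ((Fin n → ℝ) × (Fin n → ℝ) × ℝ))
    (hRdef : ∀ p, R p = (0, 0, 1)) :
    -- (i) L_{Xᵢ}η = 0 and R is a Reeb field for η
    (∀ (i : Fin n) p v,
      fderiv ℝ η p (X i p) v + η p (fderiv ℝ (X i) p v) = 0) ∧
    (∀ p, η p (R p) = 1) ∧
    (∀ p v, fderiv ℝ η p (R p) v - fderiv ℝ η p v (R p) = 0) ∧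
    -- (ii) η(Xᵢ) = (xᵢ² + yᵢ²)/2
    (∀ (i : Fin n) p, η p (X i p) = (p.1 i ^ 2 + p.2.1 i ^ 2) / 2) ∧
    -- (iii) all the fields R, X₁, …, Xₙ pairwise commute
    (∀ (i j : Fin n) p,
      fderiv ℝ (X j) p (X i p) - fderiv ℝ (X i) p (X j p) = 0) ∧
    (∀ (i : Fin n) p, fderiv ℝ (X i) p (R p) - fderiv ℝ R p (X i p) = 0) ∧
    -- (iv) linear independence on an open dense set
    (∀ p, (∀ i, ¬(p.1 i = 0 ∧ p.2.1 i = 0)) →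
      LinearIndependent ℝ fun o : Option (Fin n) =>
        o.elim (R p) fun i => X i p) ∧
    IsOpen {p : (Fin n → ℝ) × (Fin n → ℝ) × ℝ |
      ∀ i, ¬(p.1 i = 0 ∧ p.2.1 i = 0)} ∧
    Dense {p : (Fin n → ℝ) × (Fin n → ℝ) × ℝ |
      ∀ i, ¬(p.1 i = 0 ∧ p.2.1 i = 0)} := by
  have hfη : ∀ p : EE n, fderiv ℝ η p = etaD n := eta_fderiv n η hηdef
  have hfX : ∀ (i : Fin n) (p : EE n), fderiv ℝ (X i) p = XD n i p :=
    fun i p => X_fderiv n i X hXdef p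
  have hRconst : R = fun _ => ((0, 0, 1) : EE n) := funext hRdef
  have hfR : ∀ p : EE n, fderiv ℝ R p = 0 := by
    intro p; rw [hRconst]; exact fderiv_const_apply _
  refine ⟨?_, ?_, ?_, ?_, ?_, ?_, ?_, ?_, ?_⟩
  · -- (i) Lie derivative zero
    intro i p v
    rw [hfη, hfX, hηdef]
    simp [hXdef, Pi.single_apply, mul_ite, ite_mul, Finset.sum_ite_eq,
      Finset.sum_ite_eq']
  · -- η(R) = 1
    intro p; simp [hηdef, hRdef]
  · -- Reeb condition
    intro p v
    rw [hfη]
    simp [hRdef]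
  · -- (ii) Hamiltonians
    intro i p
    rw [hηdef]
    simp [hXdef, Pi.single_apply, mul_ite, ite_mul, Finset.sum_ite_eq,
      Finset.sum_ite_eq']
    ring
  · -- (iii) X's commute
    intro i j p
    rw [hfX, hfX]
    rcases eq_or_ne i j with rfl | h
    · simp
    · rw [sub_eq_zero]
      simp [hXdef, Pi.single_apply, h, h.symm]
  · -- (iii) commute with R
    intro i p
    rw [hfX, hfR]
    simp [hRdef]
  · -- (iv) linear independence
    intro p hp
    rw [Fintype.linearIndependent_iff]
    intro g hg
    rw [Fintype.sum_option] at hg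
    have h1 := congrArg Prod.fst hg
    have h2 := congrArg (fun q : EE n => q.2.1) hg
    have h3 := congrArg (fun q : EE n => q.2.2) hg
    simp only [hRdef, hXdef, Option.elim] at h1 h2 h3
    simp only [Prod.fst_add, Prod.snd_add, Prod.smul_fst, Prod.smul_snd,
      Prod.fst_sum, Prod.snd_sum, smul_zero, zero_add, smul_eq_mul,
      Prod.fst_zero, Prod.snd_zero] at h1 h2 h3
    have hsome : ∀ j : Fin n, g (some j) = 0 := by
      intro j
      have hx := congrFun h2 j
      have hy := congrFun h1 j
      simp only [Finset.sum_apply, Pi.smul_apply, Pi.single_apply, smul_eq_mul,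
        mul_ite, mul_zero, mul_neg, Finset.sum_ite_eq, Finset.mem_univ, if_true,
        Pi.zero_apply] at hx hy
      rcases not_and_or.1 (hp j) with hxj | hyj
      · rcases mul_eq_zero.1 hx with h0 | h0
        · exact h0
        · exact absurd h0 hxj
      · rcases mul_eq_zero.1 (neg_eq_zero.1 hy) with h0 | h0
        · exact h0
        · exact absurd h0 hyj
    intro o
    match o with
    | some j => exact hsome j
    | none =>
      simp only [hsome, zero_mul, Finset.sum_const_zero, add_zero, mul_one] at h3
      simpa using h3
  · -- open
    have hset : {p : EE n | ∀ i, ¬(p.1 i = 0 ∧ p.2.1 i = 0)} =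
        ⋂ i, {p : EE n | p.1 i = 0 ∧ p.2.1 i = 0}ᶜ := by
      ext p; simp
    rw [hset]
    refine isOpen_iInter_of_finite fun i => ?_
    exact ((isClosed_eq (f := fun p : EE n => p.1 i) (by fun_prop)
        continuous_const).inter
      (isClosed_eq (f := fun p : EE n => p.2.1 i) (by fun_prop)
        continuous_const)).isOpen_compl
  · -- dense
    rw [Metric.dense_iff]
    intro p ε hε
    obtain ⟨t, ht, htn⟩ := (Set.infinite_coe_iff.1
      (Set.Ioo.infinite (a := (0:ℝ)) (b := ε) hε)).exists_notMem_finite (Set.finite_range fun i : Fin n => -p.1 i)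
    refine ⟨((fun i => p.1 i + t), p.2.1, p.2.2), ?_, ?_⟩
    · rw [Metric.mem_ball]
      have h1 : dist (fun i => p.1 i + t) p.1 ≤ t := by
        refine dist_pi_le_iff (le_of_lt ht.1) |>.2 fun i => ?_
        simp [Real.dist_eq, abs_of_pos ht.1]
      calc dist (((fun i => p.1 i + t), p.2.1, p.2.2) : EE n) p
          = max (dist (fun i => p.1 i + t) p.1) (max (dist p.2.1 p.2.1) (dist p.2.2 p.2.2)) := by
            rw [Prod.dist_eq, Prod.dist_eq]
        _ ≤ t := by simp [h1, le_of_lt ht.1]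
        _ < ε := ht.2
    · intro i hi
      have h0 : p.1 i + t = 0 := hi.1
      refine htn ⟨i, ?_⟩
      show -p.1 i = t
      linarith
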